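/- If f, g : Σ⁺ → ℂ with g Lipschitz for d_θ and f ∈ L²(μ), then |∫(f∘σⁿ)·g dμ − ∫f dμ · ∫g dμ| ≤ ‖f‖_{L²(μ)} · Lip_θ(g) · θⁿ for all n ≥ 1. -/

import Mathlib

open MeasureTheory Filter Set
open scoped ENNReal BigOperators Classical

/-- The metric `d_θ` on the shift space: `d_θ(x,ξ) = θ ^ (first index of disagreement)`,
so `d_θ(x,ξ) = 1` when `x 0 ≠ ξ 0`, and `d_θ(x,x) = 0`. -/
noncomputable def dtheta {m : ℕ} (θ : ℝ) (x ξ : ℕ → Fin m) : ℝ :=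
  if x = ξ then 0 else θ ^ sInf {n : ℕ | x n ≠ ξ n}

/-- The one-sided shift map. -/
def shift {A : Type*} (x : ℕ → A) : ℕ → A := fun n => x (n + 1)

/-- Concatenation of a finite word `α` with an infinite sequence `ξ`. -/
def concat {A : Type*} {n : ℕ} (α : Fin n → A) (ξ : ℕ → A) : ℕ → A :=
  fun j => if h : j < n then α ⟨j, h⟩ else ξ (j - n)

namespace BaseMixAux

variable {m : ℕ}

/-- Point cylinder of length `N`. -/
def pcyl (m N : ℕ) (α : Fin N → Fin m) : Set (ℕ → Fin m) := {x | ∀ i : Fin N, x i = α i}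

lemma shift_iterate_apply {A : Type*} (n : ℕ) (x : ℕ → A) (j : ℕ) :
    shift^[n] x j = x (j + n) := by
  induction n generalizing x with
  | zero => rfl
  | succ n ih =>
      rw [Function.iterate_succ_apply, ih]
      rfl

lemma measurable_shift {A : Type*} [MeasurableSpace A] : Measurable (shift (A := A)) :=
  measurable_pi_lambda _ fun j => measurable_pi_apply (j + 1)

lemma measurable_shift_iter {A : Type*} [MeasurableSpace A] (n : ℕ) :
    Measurable (fun x : ℕ → A => shift^[n] x) := by
  induction n with
  | zero => exact measurable_id
  | succ n ih =>
      have : (fun x : ℕ → A => shift^[n+1] x) = (fun x : ℕ → A => shift^[n] x) ∘ shift := by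
        funext x
        simp [Function.iterate_succ_apply]
  
      rw [this]
      exact ih.comp measurable_shift

lemma measurableSet_pcyl (N : ℕ) (α : Fin N → Fin m) : MeasurableSet (pcyl m N α) := by
  have : pcyl m N α = ⋂ i : Fin N, (fun x : ℕ → Fin m => x (i : ℕ)) ⁻¹' {α i} := by
    ext x; simp [pcyl]
  rw [this]
  exact MeasurableSet.iInter fun i => (measurable_pi_apply _) (measurableSet_singleton _)

lemma pcyl_disjoint {N : ℕ} {α β : Fin N → Fin m} (h : α ≠ β) :
    Disjoint (pcyl m N α) (pcyl m N β) := by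
  rw [Set.disjoint_left]
  intro x hx hx'
  exact h (funext fun i => (hx i).symm.trans (hx' i))

lemma determined_eq_biUnion (z₀ : ℕ → Fin m) {C : Set (ℕ → Fin m)} {N : ℕ}
    (hdet : ∀ x y : ℕ → Fin m, (∀ i, i < N → x i = y i) → (x ∈ C ↔ y ∈ C)) :
    C = ⋃ α ∈ Finset.univ.filter (fun α : Fin N → Fin m => concat α z₀ ∈ C), pcyl m N α := by
  ext x
  simp only [Finset.mem_filter, Finset.mem_univ, true_and, Set.mem_iUnion, exists_prop]
  constructor
  · intro hx
    refine ⟨fun i => x i, ?_, fun i => rfl⟩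
    refine (hdet (concat (fun i : Fin N => x i) z₀) x ?_).2 hx
    intro i hi
    simp [concat, hi]
  · rintro ⟨α, hα, hxα⟩
    refine (hdet x (concat α z₀) ?_).2 hα
    intro i hi
    simp [concat, hi, hxα ⟨i, hi⟩]

lemma measure_determined (ρ : Measure (ℕ → Fin m)) (z₀ : ℕ → Fin m) {C : Set (ℕ → Fin m)}
    {N : ℕ}
    (hdet : ∀ x y : ℕ → Fin m, (∀ i, i < N → x i = y i) → (x ∈ C ↔ y ∈ C)) :
    ρ C = ∑ α ∈ Finset.univ.filter (fun α : Fin N → Fin m => concat α z₀ ∈ C),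
      ρ (pcyl m N α) := by
  conv_lhs => rw [determined_eq_biUnion z₀ hdet]
  refine measure_biUnion_finset ?_ (fun α _ => measurableSet_pcyl N α)
  intro α _ β _ hab
  exact pcyl_disjoint hab

lemma ext_of_pcyl (z₀ : ℕ → Fin m) (ρ₁ ρ₂ : Measure (ℕ → Fin m)) [IsFiniteMeasure ρ₁]
    [IsFiniteMeasure ρ₂]
    (h : ∀ N (α : Fin N → Fin m), ρ₁ (pcyl m N α) = ρ₂ (pcyl m N α)) : ρ₁ = ρ₂ := by
  have huniv : ρ₁ Set.univ = ρ₂ Set.univ := by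
    have hu : pcyl m 0 (fun i => i.elim0) = Set.univ :=
      Set.eq_univ_of_forall (fun x i => i.elim0)
    rw [← hu]
    exact h 0 _
  refine ext_of_generate_finite _ generateFrom_measurableCylinders.symm
    isPiSystem_measurableCylinders ?_ huniv
  intro t ht
  obtain ⟨I, S, hS, rfl⟩ := (mem_measurableCylinders t).1 ht
  have hdet : ∀ x y : ℕ → Fin m, (∀ i, i < (I.sup id) + 1 → x i = y i) →
      (x ∈ cylinder I S ↔ y ∈ cylinder I S) := by
    intro x y hxy
    have hres : I.restrict x = I.restrict y := by
      funext i
      exact hxy i (Nat.lt_succ_of_le (Finset.le_sup (f := id) i.2))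
    simp only [mem_cylinder, hres]
  rw [measure_determined ρ₁ z₀ hdet, measure_determined ρ₂ z₀ hdet]
  exact Finset.sum_congr rfl fun α _ => h _ α

/-- concatenating two finite words. -/
def wcat {n N : ℕ} (α : Fin n → Fin m) (β : Fin N → Fin m) : Fin (n + N) → Fin m :=
  fun i => if h : (i : ℕ) < n then α ⟨i, h⟩ else β ⟨(i : ℕ) - n, by have := i.isLt; omega⟩

lemma pcyl_inter {n N : ℕ} (α : Fin n → Fin m) (β : Fin N → Fin m) :
    pcyl m n α ∩ (shift^[n] ⁻¹' pcyl m N β) = pcyl m (n + N) (wcat α β) := by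
  ext x
  simp only [pcyl, Set.mem_inter_iff, Set.mem_preimage, Set.mem_setOf_eq]
  constructor
  · rintro ⟨h1, h2⟩ i
    by_cases h : (i : ℕ) < n
    · simpa [wcat, h] using h1 ⟨i, h⟩
    · have hi := i.isLt
      have h2' : x ((i : ℕ) - n + n) = β ⟨(i : ℕ) - n, by omega⟩ := by
        have := h2 ⟨(i : ℕ) - n, by omega⟩
        rwa [shift_iterate_apply] at this
      simp only [wcat, dif_neg h]
      rw [show (i : ℕ) - n + n = (i : ℕ) by omega] at h2'
      exact h2'
  · intro h
    refine ⟨fun i => ?_, fun j => ?_⟩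
    · have := h ⟨(i : ℕ), by have := i.isLt; omega⟩
      simpa [wcat, i.isLt] using this
    · have := h ⟨(j : ℕ) + n, by have := j.isLt; omega⟩
      rw [shift_iterate_apply]
      simp only [wcat] at this
      rw [dif_neg (by omega)] at this
      simpa [Nat.add_sub_cancel] using this

lemma iUnion_pcyl (n : ℕ) :
    ⋃ α ∈ (Finset.univ : Finset (Fin n → Fin m)), pcyl m n α = Set.univ := by
  apply Set.eq_univ_of_forall
  intro x
  simp only [Set.mem_iUnion, exists_prop]
  exact ⟨fun i => x i, Finset.mem_univ _, fun i => rfl⟩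

variable (μ : Measure (ℕ → Fin m)) [IsProbabilityMeasure μ]

lemma map_restrict (hm : 0 < m)
    (hμp : ∀ N (α : Fin N → Fin m), μ (pcyl m N α) = ((m : ℝ≥0∞))⁻¹ ^ N)
    (n : ℕ) (α : Fin n → Fin m) :
    Measure.map (shift^[n]) (μ.restrict (pcyl m n α)) = ((m : ℝ≥0∞))⁻¹ ^ n • μ := by
  have hmeas := measurable_shift_iter (A := Fin m) n
  haveI hfin1 : IsFiniteMeasure (Measure.map (shift^[n]) (μ.restrict (pcyl m n α))) := by
    constructor
    rw [Measure.map_apply hmeas MeasurableSet.univ, Set.preimage_univ]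
    exact measure_lt_top _ _
  haveI hfin2 : IsFiniteMeasure (((m : ℝ≥0∞))⁻¹ ^ n • μ) := by
    constructor
    have hlt : ((m : ℝ≥0∞))⁻¹ < ⊤ := ENNReal.inv_lt_top.2 (by exact_mod_cast hm)
    simp only [Measure.smul_apply, smul_eq_mul, measure_univ, mul_one]
    exact ENNReal.pow_lt_top hlt
  refine ext_of_pcyl (fun _ => ⟨0, hm⟩) _ _ ?_
  intro N β
  rw [Measure.map_apply hmeas (measurableSet_pcyl N β),
      Measure.restrict_apply (hmeas (measurableSet_pcyl N β)),
      Set.inter_comm, pcyl_inter, hμp, Measure.smul_apply, hμp, smul_eq_mul, pow_add]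

lemma map_shift (hm : 0 < m)
    (hμp : ∀ N (α : Fin N → Fin m), μ (pcyl m N α) = ((m : ℝ≥0∞))⁻¹ ^ N)
    (n : ℕ) : Measure.map (shift^[n]) μ = μ := by
  have hmeas := measurable_shift_iter (A := Fin m) n
  haveI hfin1 : IsFiniteMeasure (Measure.map (shift^[n]) μ) := by
    constructor
    rw [Measure.map_apply hmeas MeasurableSet.univ, Set.preimage_univ]
    exact measure_lt_top _ _
  refine ext_of_pcyl (fun _ => ⟨0, hm⟩) _ _ ?_
  intro N β
  rw [Measure.map_apply hmeas (measurableSet_pcyl N β), hμp]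
  have hdecomp : shift^[n] ⁻¹' pcyl m N β
      = ⋃ α ∈ (Finset.univ : Finset (Fin n → Fin m)), pcyl m (n + N) (wcat α β) := by
    rw [← Set.univ_inter (shift^[n] ⁻¹' pcyl m N β), ← iUnion_pcyl (m := m) n,
      Set.iUnion₂_inter]
    refine Set.iUnion₂_congr fun α _ => ?_
    exact pcyl_inter α β
  rw [hdecomp, measure_biUnion_finset ?_ (fun α _ => measurableSet_pcyl _ _)]
  · simp only [hμp]
    rw [Finset.sum_const, Finset.card_univ]
    have hcard : Fintype.card (Fin n → Fin m) = m ^ n := by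
      simp [Fintype.card_fun]
    rw [hcard, nsmul_eq_mul, Nat.cast_pow, pow_add, ← mul_assoc, ← mul_pow,
      ENNReal.mul_inv_cancel (by exact_mod_cast hm.ne') (ENNReal.natCast_ne_top m),
      one_pow, one_mul]
  · intro α _ β' _ hab
    refine pcyl_disjoint fun hcontra => hab ?_
    funext i
    have := congrFun hcontra ⟨(i : ℕ), by have := i.isLt; omega⟩
    simpa [wcat, i.isLt] using this

lemma setIntegral_comp_shift (hm : 0 < m)
    (hμp : ∀ N (α : Fin N → Fin m), μ (pcyl m N α) = ((m : ℝ≥0∞))⁻¹ ^ N)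
    (n : ℕ) (α : Fin n → Fin m) {F : (ℕ → Fin m) → ℂ} (hF : Measurable F) :
    ∫ x in pcyl m n α, F (shift^[n] x) ∂μ = (((m : ℝ))⁻¹ ^ n) • ∫ y, F y ∂μ := by
  have hmeas := measurable_shift_iter (A := Fin m) n
  rw [← integral_map hmeas.aemeasurable hF.aestronglyMeasurable,
    map_restrict μ hm hμp n α, integral_smul_measure]
  congr 1
  simp [ENNReal.toReal_pow, ENNReal.toReal_inv]

lemma integral_eq_sum_pcyl (n : ℕ) {F : (ℕ → Fin m) → ℂ} (hF : Integrable F μ) :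
    ∫ x, F x ∂μ = ∑ α : Fin n → Fin m, ∫ x in pcyl m n α, F x ∂μ := by
  have h1 : ∫ x, F x ∂μ = ∫ x in (⋃ α ∈ (Finset.univ : Finset (Fin n → Fin m)),
      pcyl m n α), F x ∂μ := by
    rw [iUnion_pcyl, Measure.restrict_univ]
  rw [h1, integral_biUnion_finset Finset.univ (fun α _ => measurableSet_pcyl n α)
    (fun α _ β _ hab => pcyl_disjoint hab) (fun α _ => hF.integrableOn)]

lemma dtheta_le {θ : ℝ} (hθ0 : 0 < θ) (hθ1 : θ < 1) {N : ℕ} {x y : ℕ → Fin m}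
    (h : ∀ i, i < N → x i = y i) : dtheta θ x y ≤ θ ^ N := by
  unfold dtheta
  split_ifs with hxy
  · positivity
  · have hne : {j : ℕ | x j ≠ y j}.Nonempty := by
      by_contra hcon
      apply hxy
      funext j
      by_contra hj
      exact hcon ⟨j, hj⟩
    have hmem := Nat.sInf_mem hne
    have hNle : N ≤ sInf {j : ℕ | x j ≠ y j} := by
      by_contra hlt
      push_neg at hlt
      exact hmem (h _ hlt)
    exact pow_le_pow_of_le_one hθ0.le hθ1.le hNle

lemma measurable_of_lipschitz {θ : ℝ} (hθ0 : 0 < θ) (hθ1 : θ < 1) (hm : 0 < m)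
    {g : (ℕ → Fin m) → ℂ} {L : ℝ} (hL : 0 ≤ L)
    (hLip : ∀ x y, ‖g x - g y‖ ≤ L * dtheta θ x y) : Measurable g := by
  set z₀ : ℕ → Fin m := fun _ => ⟨0, hm⟩ with hz₀
  have hNmeas : ∀ N : ℕ, Measurable
      (fun x : ℕ → Fin m => g (concat (fun i : Fin N => x i) z₀)) := by
    intro N
    have : (fun x : ℕ → Fin m => g (concat (fun i : Fin N => x i) z₀))
        = (fun v : Fin N → Fin m => g (concat v z₀)) ∘ (fun x (i : Fin N) => x (i : ℕ)) := rfl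
    rw [this]
    exact (measurable_of_countable _).comp
      (measurable_pi_lambda _ fun i => measurable_pi_apply _)
  have htend : ∀ x : ℕ → Fin m,
      Tendsto (fun N : ℕ => g (concat (fun i : Fin N => x i) z₀)) atTop (nhds (g x)) := by
    intro x
    rw [tendsto_iff_norm_sub_tendsto_zero]
    have h0 : Tendsto (fun N : ℕ => L * θ ^ N) atTop (nhds 0) := by
      have := tendsto_pow_atTop_nhds_zero_of_lt_one hθ0.le hθ1
      simpa using this.const_mul L
    refine squeeze_zero (fun N => norm_nonneg _) (fun N => ?_) h0
    refine (hLip _ _).trans ?_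
    refine mul_le_mul_of_nonneg_left (dtheta_le hθ0 hθ1 fun i hi => ?_) hL
    simp [concat, hi]
  exact measurable_of_tendsto_metrizable hNmeas
    (tendsto_pi_nhds.2 htend)

end BaseMixAux

/-- exponential mixing of the measure of maximal entropy on the base:
for `f ∈ L²(μ)` and `g` Lipschitz for `d_θ` with constant `L`,
`|∫ (f∘σⁿ) g dμ − ∫f dμ ∫g dμ| ≤ ‖f‖_{L²(μ)} L θⁿ`. -/
theorem base_exponential_mixing (k : ℕ) (hk : 2 ≤ k) (θ : ℝ) (hθ0 : 0 < θ) (hθ1 : θ < 1)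
    (μ : Measure (ℕ → Fin (2 * k))) [IsProbabilityMeasure μ]
    (hμ : ∀ (n : ℕ) (α : Fin n → Fin (2 * k)),
      μ {x | ∀ i : Fin n, x i = α i} = ((1 : ℝ≥0∞) / (2 * k)) ^ n)
    (f g : (ℕ → Fin (2 * k)) → ℂ) (hfm : Measurable f) (hf2 : MemLp f 2 μ)
    (L : ℝ) (hL : 0 ≤ L) (hLip : ∀ x y, ‖g x - g y‖ ≤ L * dtheta θ x y)
    (n : ℕ) (hn : 1 ≤ n) :
    ‖(∫ x, f (shift^[n] x) * g x ∂μ) - (∫ x, f x ∂μ) * ∫ x, g x ∂μ‖ ≤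
      Real.sqrt (∫ x, ‖f x‖ ^ 2 ∂μ) * L * θ ^ n := by
  classical
  have hm : 0 < 2 * k := by omega
  set z₀ : ℕ → Fin (2 * k) := fun _ => ⟨0, hm⟩ with hz₀
  have hμp : ∀ N (α : Fin N → Fin (2 * k)),
      μ (BaseMixAux.pcyl (2 * k) N α) = (((2 * k : ℕ) : ℝ≥0∞))⁻¹ ^ N := by
    intro N α
    have h1 := hμ N α
    have h2 : ((1 : ℝ≥0∞) / (2 * k)) = (((2 * k : ℕ) : ℝ≥0∞))⁻¹ := by
      rw [one_div]
      congr 1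
      push_cast
      ring
    rw [← h2]
    exact h1
  have hgm : Measurable g := BaseMixAux.measurable_of_lipschitz hθ0 hθ1 hm hL hLip
  have hshift := BaseMixAux.measurable_shift_iter (A := Fin (2 * k)) n
  set B : ℝ := L + ‖g z₀‖ with hBdef
  have hgbd : ∀ x, ‖g x‖ ≤ B := by
    intro x
    have h1 : ‖g x - g z₀‖ ≤ L := by
      refine (hLip x z₀).trans ?_
      have hd : dtheta θ x z₀ ≤ 1 := by
        have := BaseMixAux.dtheta_le (m := 2 * k) hθ0 hθ1 (N := 0) (x := x) (y := z₀)
          (fun i hi => absurd hi (Nat.not_lt_zero i))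
        simpa using this
      calc L * dtheta θ x z₀ ≤ L * 1 := mul_le_mul_of_nonneg_left hd hL
      _ = L := mul_one L
    have h2 := norm_sub_norm_le (g x) (g z₀)
    rw [hBdef]
    linarith
  have hf_int : Integrable f μ := hf2.integrable (by norm_num)
  have hg_int : Integrable g μ :=
    (integrable_const B).mono' hgm.aestronglyMeasurable (ae_of_all _ hgbd)
  have hconcat_meas : ∀ (α : Fin n → Fin (2 * k)),
      Measurable (fun y : ℕ → Fin (2 * k) => concat α y) := by
    intro α
    refine measurable_pi_lambda _ fun j => ?_
    by_cases hj : j < n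
    · simp only [concat, dif_pos hj]; exact measurable_const
    · simp only [concat, dif_neg hj]; exact measurable_pi_apply _
  have hgα_meas : ∀ α : Fin n → Fin (2 * k), Measurable (fun y => g (concat α y)) :=
    fun α => hgm.comp (hconcat_meas α)
  have hgα_int : ∀ α : Fin n → Fin (2 * k), Integrable (fun y => g (concat α y)) μ := fun α =>
    (integrable_const B).mono' (hgα_meas α).aestronglyMeasurable (ae_of_all _ fun y => hgbd _)
  have hfgα_int : ∀ α : Fin n → Fin (2 * k), Integrable (fun y => f y * g (concat α y)) μ := by
    intro α
    refine (hf_int.norm.const_mul B).mono'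
      (hfm.mul (hgα_meas α)).aestronglyMeasurable (ae_of_all _ fun y => ?_)
    rw [norm_mul]
    calc ‖f y‖ * ‖g (concat α y)‖ ≤ ‖f y‖ * B :=
          mul_le_mul_of_nonneg_left (hgbd _) (norm_nonneg _)
    _ = B * ‖f y‖ := mul_comm _ _
  have hfs_int : Integrable (fun x => f (shift^[n] x)) μ := by
    have hmap : Integrable f (Measure.map (shift^[n]) μ) := by
      rw [BaseMixAux.map_shift μ hm hμp n]; exact hf_int
    exact (integrable_map_measure hfm.aestronglyMeasurable hshift.aemeasurable).1 hmap
  have hfg_int : Integrable (fun x => f (shift^[n] x) * g x) μ := by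
    refine (hfs_int.norm.const_mul B).mono'
      ((hfm.comp hshift).mul hgm).aestronglyMeasurable (ae_of_all _ fun x => ?_)
    rw [norm_mul]
    calc ‖f (shift^[n] x)‖ * ‖g x‖ ≤ ‖f (shift^[n] x)‖ * B :=
          mul_le_mul_of_nonneg_left (hgbd _) (norm_nonneg _)
    _ = B * ‖f (shift^[n] x)‖ := mul_comm _ _
  have key : ∀ (α : Fin n → Fin (2 * k)) (y : ℕ → Fin (2 * k)),
      ‖g (concat α y) - ∫ z, g (concat α z) ∂μ‖ ≤ L * θ ^ n := by
    intro α y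
    have h1 : g (concat α y) - ∫ z, g (concat α z) ∂μ
        = ∫ z, (g (concat α y) - g (concat α z)) ∂μ := by
      rw [integral_sub (integrable_const _) (hgα_int α), integral_const, probReal_univ,
        one_smul]
    rw [h1]
    calc ‖∫ z, (g (concat α y) - g (concat α z)) ∂μ‖ ≤ ∫ _z, L * θ ^ n ∂μ := by
          refine norm_integral_le_of_norm_le (integrable_const _) (ae_of_all _ fun z => ?_)
          refine (hLip _ _).trans (mul_le_mul_of_nonneg_left ?_ hL)
          refine BaseMixAux.dtheta_le hθ0 hθ1 fun i hi => ?_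
          simp [concat, hi]
    _ = L * θ ^ n := by
          rw [integral_const, probReal_univ, one_smul]
  have hconcat_eq : ∀ (α : Fin n → Fin (2 * k)) (x : ℕ → Fin (2 * k)),
      x ∈ BaseMixAux.pcyl (2 * k) n α → concat α (shift^[n] x) = x := by
    intro α x hx
    funext j
    by_cases hj : j < n
    · simp only [concat, dif_pos hj]
      exact (hx ⟨j, hj⟩).symm
    · simp only [concat, dif_neg hj]
      rw [BaseMixAux.shift_iterate_apply]
      congr 1
      omega
  have hstep1 : ∫ x, f (shift^[n] x) * g x ∂μ
      = ∑ α : Fin n → Fin (2 * k),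
        ((((2 * k : ℕ) : ℝ))⁻¹ ^ n) • ∫ y, f y * g (concat α y) ∂μ := by
    rw [BaseMixAux.integral_eq_sum_pcyl μ n hfg_int]
    refine Finset.sum_congr rfl fun α _ => ?_
    have hcongr : ∫ x in BaseMixAux.pcyl (2 * k) n α, f (shift^[n] x) * g x ∂μ
        = ∫ x in BaseMixAux.pcyl (2 * k) n α,
            f (shift^[n] x) * g (concat α (shift^[n] x)) ∂μ := by
      refine setIntegral_congr_fun (BaseMixAux.measurableSet_pcyl n α) fun x hx => ?_
      rw [hconcat_eq α x hx]
    rw [hcongr]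
    exact BaseMixAux.setIntegral_comp_shift μ hm hμp n α (hfm.mul (hgα_meas α))
  have hstep2 : ∫ x, g x ∂μ
      = ∑ α : Fin n → Fin (2 * k),
        ((((2 * k : ℕ) : ℝ))⁻¹ ^ n) • ∫ z, g (concat α z) ∂μ := by
    rw [BaseMixAux.integral_eq_sum_pcyl μ n hg_int]
    refine Finset.sum_congr rfl fun α _ => ?_
    have hcongr : ∫ x in BaseMixAux.pcyl (2 * k) n α, g x ∂μ
        = ∫ x in BaseMixAux.pcyl (2 * k) n α, g (concat α (shift^[n] x)) ∂μ := by
      refine setIntegral_congr_fun (BaseMixAux.measurableSet_pcyl n α) fun x hx => ?_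
      rw [hconcat_eq α x hx]
    rw [hcongr]
    exact BaseMixAux.setIntegral_comp_shift μ hm hμp n α (hgα_meas α)
  have hsplit : ∀ α : Fin n → Fin (2 * k),
      ∫ y, f y * (g (concat α y) - ∫ z, g (concat α z) ∂μ) ∂μ
      = (∫ y, f y * g (concat α y) ∂μ) - (∫ y, f y ∂μ) * ∫ z, g (concat α z) ∂μ := by
    intro α
    simp_rw [mul_sub]
    rw [integral_sub (hfgα_int α) (hf_int.mul_const _), integral_mul_const]
  have hmain : (∫ x, f (shift^[n] x) * g x ∂μ) - (∫ x, f x ∂μ) * ∫ x, g x ∂μ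
      = ∑ α : Fin n → Fin (2 * k), ((((2 * k : ℕ) : ℝ))⁻¹ ^ n) •
          ∫ y, f y * (g (concat α y) - ∫ z, g (concat α z) ∂μ) ∂μ := by
    rw [hstep1, hstep2, Finset.mul_sum, ← Finset.sum_sub_distrib]
    refine Finset.sum_congr rfl fun α _ => ?_
    rw [mul_smul_comm, ← smul_sub, hsplit α]
  have hCS : ∫ x, ‖f x‖ ∂μ ≤ Real.sqrt (∫ x, ‖f x‖ ^ 2 ∂μ) := by
    set a := ∫ x, ‖f x‖ ∂μ with ha
    have ha0 : 0 ≤ a := integral_nonneg fun x => norm_nonneg _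
    have hsq : Integrable (fun x => ‖f x‖ ^ 2) μ := hf2.norm.integrable_sq
    have hvar : 0 ≤ ∫ x, (‖f x‖ - a) ^ 2 ∂μ := integral_nonneg fun x => sq_nonneg _
    have hexp : ∫ x, (‖f x‖ - a) ^ 2 ∂μ = (∫ x, ‖f x‖ ^ 2 ∂μ) - a ^ 2 := by
      have hptw : ∀ x : ℕ → Fin (2 * k),
          (‖f x‖ - a) ^ 2 = (‖f x‖ ^ 2 - (2 * a) * ‖f x‖) + a ^ 2 := fun x => by ring
      simp_rw [hptw]
      have hint2 : Integrable (fun x => (2 * a) * ‖f x‖) μ := hf_int.norm.const_mul (2 * a)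
      have hint1 : Integrable (fun x => ‖f x‖ ^ 2 - (2 * a) * ‖f x‖) μ := hsq.sub hint2
      rw [integral_add hint1 (integrable_const _), integral_sub hsq hint2, integral_const_mul,
        integral_const, probReal_univ, one_smul, ← ha]
      ring
    have h2 : a ^ 2 ≤ ∫ x, ‖f x‖ ^ 2 ∂μ := by linarith
    have h3 := Real.sqrt_le_sqrt h2
    rwa [Real.sqrt_sq ha0] at h3
  rw [hmain]
  have hr0 : (0 : ℝ) ≤ (((2 * k : ℕ) : ℝ))⁻¹ ^ n := by positivity
  have hEα : ∀ α : Fin n → Fin (2 * k),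
      ‖∫ y, f y * (g (concat α y) - ∫ z, g (concat α z) ∂μ) ∂μ‖
        ≤ (∫ y, ‖f y‖ ∂μ) * (L * θ ^ n) := by
    intro α
    calc ‖∫ y, f y * (g (concat α y) - ∫ z, g (concat α z) ∂μ) ∂μ‖
        ≤ ∫ y, ‖f y‖ * (L * θ ^ n) ∂μ := by
          refine norm_integral_le_of_norm_le (hf_int.norm.mul_const _) (ae_of_all _ fun y => ?_)
          rw [norm_mul]
          exact mul_le_mul_of_nonneg_left (key α y) (norm_nonneg _)
    _ = (∫ y, ‖f y‖ ∂μ) * (L * θ ^ n) := integral_mul_const _ _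
  have hne : ((2 * k : ℕ) : ℝ) ≠ 0 := Nat.cast_ne_zero.2 (by omega)
  calc ‖∑ α : Fin n → Fin (2 * k), ((((2 * k : ℕ) : ℝ))⁻¹ ^ n) •
          ∫ y, f y * (g (concat α y) - ∫ z, g (concat α z) ∂μ) ∂μ‖
      ≤ ∑ α : Fin n → Fin (2 * k), ‖((((2 * k : ℕ) : ℝ))⁻¹ ^ n) •
          ∫ y, f y * (g (concat α y) - ∫ z, g (concat α z) ∂μ) ∂μ‖ := norm_sum_le _ _
  _ ≤ ∑ _α : Fin n → Fin (2 * k),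
        ((((2 * k : ℕ) : ℝ))⁻¹ ^ n) * ((∫ y, ‖f y‖ ∂μ) * (L * θ ^ n)) := by
        refine Finset.sum_le_sum fun α _ => ?_
        rw [norm_smul, Real.norm_eq_abs, abs_of_nonneg hr0]
        exact mul_le_mul_of_nonneg_left (hEα α) hr0
  _ = (∫ y, ‖f y‖ ∂μ) * (L * θ ^ n) := by
        rw [Finset.sum_const, Finset.card_univ]
        have hcard : Fintype.card (Fin n → Fin (2 * k)) = (2 * k) ^ n := by
          simp [Fintype.card_fun]
        rw [hcard, nsmul_eq_mul, Nat.cast_pow, ← mul_assoc, ← mul_pow,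
          mul_inv_cancel₀ hne, one_pow, one_mul]
  _ ≤ Real.sqrt (∫ x, ‖f x‖ ^ 2 ∂μ) * L * θ ^ n := by
        rw [mul_assoc (Real.sqrt _)]
        exact mul_le_mul_of_nonneg_right hCS (by positivity)
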